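/- MIN-CUT recurrence: Under the same setting as the MAX-CUT recurrence, with MINCUT_i and MINCUT_{i−1} defined as the minimum (instead of maximum) of cut(A, B) over the same families of constrained partitions, one has MINCUT_i(p, q, r, t) = (y − m)·(p·t + q·r) + min over natural numbers r₀ ≤ p, t₀ ≤ q with r₀ + t₀ = c of MINCUT_{i−1}(p − r₀, q − t₀, r₀ + r, t₀ + t). -/

import Mathlib

noncomputable def cut (A B : Multiset ℝ) : ℝ :=
  (A.map (fun a => (B.map (fun b => |a - b|)).sum)).sum

lemma cut_add_left (A A' B : Multiset ℝ) : cut (A + A') B = cut A B + cut A' B := by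
  simp [cut]

lemma cut_add_right (A B B' : Multiset ℝ) : cut A (B + B') = cut A B + cut A B' := by
  simp [cut, Multiset.sum_map_add]

lemma cut_nonneg (A B : Multiset ℝ) : 0 ≤ cut A B := by
  apply Multiset.sum_nonneg
  intro x hx
  obtain ⟨a, _, rfl⟩ := Multiset.mem_map.1 hx
  apply Multiset.sum_nonneg
  intro z hz
  obtain ⟨b, _, rfl⟩ := Multiset.mem_map.1 hz
  exact abs_nonneg _

lemma sum_abs_sub (A : Multiset ℝ) (x : ℝ) (h : ∀ a ∈ A, a ≤ x) :
    (A.map fun a => |x - a|).sum = (Multiset.card A : ℝ) * x - A.sum := by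
  induction A using Multiset.induction with
  | empty => simp
  | cons a s ih =>
    simp only [Multiset.map_cons, Multiset.sum_cons, Multiset.card_cons]
    rw [ih (fun b hb => h b (Multiset.mem_cons_of_mem hb)),
      abs_of_nonneg (sub_nonneg.2 (h a (Multiset.mem_cons_self a s)))]
    push_cast
    ring

lemma cut_rep_right (A : Multiset ℝ) (n : ℕ) (x : ℝ) (h : ∀ a ∈ A, a ≤ x) :
    cut A (Multiset.replicate n x) = n * ((Multiset.card A : ℝ) * x - A.sum) := by
  have : cut A (Multiset.replicate n x) = n * (A.map fun a => |x - a|).sum := by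
    simp [cut, Multiset.map_replicate, Multiset.sum_replicate, abs_sub_comm,
      Multiset.sum_map_mul_left]
  rw [this, sum_abs_sub A x h]

lemma cut_rep_left (n : ℕ) (x : ℝ) (B : Multiset ℝ) (h : ∀ b ∈ B, b ≤ x) :
    cut (Multiset.replicate n x) B = n * ((Multiset.card B : ℝ) * x - B.sum) := by
  have : cut (Multiset.replicate n x) B = n * (B.map fun b => |x - b|).sum := by
    simp [cut, Multiset.map_replicate, Multiset.sum_replicate]
  rw [this, sum_abs_sub B x h]

lemma cut_rep_rep (n k : ℕ) (x z : ℝ) :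
    cut (Multiset.replicate n x) (Multiset.replicate k z) = (n : ℝ) * k * |x - z| := by
  simp [cut, Multiset.map_replicate, Multiset.sum_replicate]
  ring

lemma key_cut (m y : ℝ) (hmy : m ≤ y) (A B : Multiset ℝ)
    (hA : ∀ a ∈ A, a ≤ m) (hB : ∀ b ∈ B, b ≤ m) (r₀ t₀ r t : ℕ) :
    cut (A + Multiset.replicate r₀ m + Multiset.replicate r y)
        (B + Multiset.replicate t₀ m + Multiset.replicate t y)
      = (y - m) * (((Multiset.card A : ℝ) + r₀) * t + ((Multiset.card B : ℝ) + t₀) * r)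
        + cut (A + Multiset.replicate (r₀ + r) m) (B + Multiset.replicate (t₀ + t) m) := by
  have hAy : ∀ a ∈ A, a ≤ y := fun a ha => (hA a ha).trans hmy
  have hBy : ∀ b ∈ B, b ≤ y := fun b hb => (hB b hb).trans hmy
  rw [Multiset.replicate_add, Multiset.replicate_add]
  simp only [cut_add_left, cut_add_right]
  simp only [cut_rep_rep]
  rw [cut_rep_right A t₀ m hA, cut_rep_right A t y hAy, cut_rep_left r₀ m B hB,
    cut_rep_left r y B hBy, cut_rep_right A t m hA, cut_rep_left r m B hB]
  rw [sub_self, abs_zero, sub_self, abs_zero, abs_of_nonpos (sub_nonpos.2 hmy),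
    abs_of_nonneg (sub_nonneg.2 hmy)]
  ring

lemma decomp (Q : Multiset ℝ) (m : ℝ) (c : ℕ) (A₀ B₀ : Multiset ℝ)
    (h : A₀ + B₀ = Q + Multiset.replicate c m) :
    ∃ r₀ t₀ A₁ B₁, r₀ + t₀ = c ∧ A₀ = A₁ + Multiset.replicate r₀ m ∧
      B₀ = B₁ + Multiset.replicate t₀ m ∧ A₁ + B₁ = Q := by
  have hcount : A₀.count m + B₀.count m = Q.count m + c := by
    have := congrArg (Multiset.count m) h
    simpa [Multiset.count_replicate] using this
  obtain ⟨r₀, t₀, hr₀, ht₀, hrt⟩ : ∃ r₀ t₀, r₀ ≤ A₀.count m ∧ t₀ ≤ B₀.count m ∧ r₀ + t₀ = c :=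
    ⟨min (A₀.count m) c, c - min (A₀.count m) c, by omega, by omega, by omega⟩
  obtain ⟨A₁, hA₁⟩ := Multiset.le_iff_exists_add.1 (Multiset.le_count_iff_replicate_le.1 hr₀)
  obtain ⟨B₁, hB₁⟩ := Multiset.le_iff_exists_add.1 (Multiset.le_count_iff_replicate_le.1 ht₀)
  refine ⟨r₀, t₀, A₁, B₁, hrt, hA₁.trans (add_comm _ _), hB₁.trans (add_comm _ _), ?_⟩
  have key : A₀ + B₀ = A₁ + B₁ + Multiset.replicate c m := by
    rw [hA₁, hB₁, ← hrt, Multiset.replicate_add]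
    abel
  rw [key] at h
  exact add_right_cancel h

lemma exists_split (Q : Multiset ℝ) (n : ℕ) (hn : n ≤ Multiset.card Q) :
    ∃ A B : Multiset ℝ, A + B = Q ∧ Multiset.card A = n := by
  refine ⟨(Q.toList.take n : List ℝ), (Q.toList.drop n : List ℝ), ?_, ?_⟩
  · rw [Multiset.coe_add, List.take_append_drop, Multiset.coe_toList]
  · simp [Multiset.length_toList, hn]

lemma sInf_const_add (C : ℝ) {S : Set ℝ} (hne : S.Nonempty) (hbd : BddBelow S) :
    sInf ((fun x => C + x) '' S) = C + sInf S := by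
  have hglb : IsGLB ((fun x => C + x) '' S) (C + sInf S) := by
    constructor
    · rintro b ⟨x, hx, rfl⟩
      exact add_le_add_right (csInf_le hbd hx) C
    · intro w hw
      have : w - C ≤ sInf S := by
        apply le_csInf hne
        intro x hx
        have := hw ⟨x, hx, rfl⟩
        dsimp only at this
        linarith
      linarith
  exact hglb.csInf_eq (hne.image _)

lemma sInf_nested (P : ℕ → ℕ → Prop) (S : ℕ → ℕ → Set ℝ)
    (hne : ∀ a b, P a b → (S a b).Nonempty)
    (hbd : ∀ a b, P a b → BddBelow (S a b))
    (hP : ∃ a b, P a b)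
    (hUbd : BddBelow {v | ∃ a b, P a b ∧ v ∈ S a b}) :
    sInf {v | ∃ a b, P a b ∧ v ∈ S a b} = sInf {v | ∃ a b, P a b ∧ v = sInf (S a b)} := by
  obtain ⟨a₀, b₀, hab₀⟩ := hP
  obtain ⟨x₀, hx₀⟩ := hne a₀ b₀ hab₀
  have hUne : {v | ∃ a b, P a b ∧ v ∈ S a b}.Nonempty := ⟨x₀, a₀, b₀, hab₀, hx₀⟩
  have hTne : {v | ∃ a b, P a b ∧ v = sInf (S a b)}.Nonempty := ⟨_, a₀, b₀, hab₀, rfl⟩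
  have hsub : ∀ a b, P a b → S a b ⊆ {v | ∃ a b, P a b ∧ v ∈ S a b} :=
    fun a b hab x hx => ⟨a, b, hab, hx⟩
  have hTbd : BddBelow {v | ∃ a b, P a b ∧ v = sInf (S a b)} := by
    refine ⟨sInf {v | ∃ a b, P a b ∧ v ∈ S a b}, ?_⟩
    rintro v ⟨a, b, hab, rfl⟩
    exact csInf_le_csInf hUbd (hne a b hab) (hsub a b hab)
  apply le_antisymm
  · apply le_csInf hTne
    rintro v ⟨a, b, hab, rfl⟩
    exact csInf_le_csInf hUbd (hne a b hab) (hsub a b hab)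
  · apply le_csInf hUne
    rintro v ⟨a, b, hab, hv⟩
    exact (csInf_le hTbd ⟨a, b, hab, rfl⟩).trans (csInf_le (hbd a b hab) hv)

theorem mincut_recurrence (Q : Multiset ℝ) (m y : ℝ)
    (hQ : ∀ z ∈ Q, z ≤ m) (hmy : m ≤ y)
    (c p q r t : ℕ) (hpq : p + q = Multiset.card Q + c)
    (MINCUTi MINCUTprev : ℕ → ℕ → ℕ → ℕ → ℝ)
    (hMi : ∀ p' q' r' t', MINCUTi p' q' r' t' =
      sInf {v : ℝ | ∃ A₀ B₀ : Multiset ℝ,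
        A₀ + B₀ = Q + Multiset.replicate c m ∧
        Multiset.card A₀ = p' ∧ Multiset.card B₀ = q' ∧
        v = cut (A₀ + Multiset.replicate r' y) (B₀ + Multiset.replicate t' y)})
    (hMp : ∀ p' q' r' t', MINCUTprev p' q' r' t' =
      sInf {v : ℝ | ∃ A₀ B₀ : Multiset ℝ,
        A₀ + B₀ = Q ∧
        Multiset.card A₀ = p' ∧ Multiset.card B₀ = q' ∧
        v = cut (A₀ + Multiset.replicate r' m) (B₀ + Multiset.replicate t' m)}) :
    MINCUTi p q r t = (y - m) * ((p : ℝ) * t + (q : ℝ) * r) +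
      sInf {v : ℝ | ∃ r₀ t₀ : ℕ, r₀ ≤ p ∧ t₀ ≤ q ∧ r₀ + t₀ = c ∧
        v = MINCUTprev (p - r₀) (q - t₀) (r₀ + r) (t₀ + t)} := by
  classical
  set C : ℝ := (y - m) * ((p : ℝ) * t + (q : ℝ) * r) with hCdef
  set Sp : ℕ → ℕ → Set ℝ := fun r₀ t₀ => {v : ℝ | ∃ A₀ B₀ : Multiset ℝ,
      A₀ + B₀ = Q ∧ Multiset.card A₀ = p - r₀ ∧ Multiset.card B₀ = q - t₀ ∧
      v = cut (A₀ + Multiset.replicate (r₀ + r) m) (B₀ + Multiset.replicate (t₀ + t) m)}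
    with hSpdef
  set P : ℕ → ℕ → Prop := fun r₀ t₀ => r₀ ≤ p ∧ t₀ ≤ q ∧ r₀ + t₀ = c with hPdef
  -- basic facts
  have hQm : ∀ z ∈ Q + Multiset.replicate c m, z ≤ m := by
    intro z hz
    rcases Multiset.mem_add.1 hz with h | h
    · exact hQ z h
    · exact le_of_eq (Multiset.eq_of_mem_replicate h)
  have hSpne : ∀ r₀ t₀, P r₀ t₀ → (Sp r₀ t₀).Nonempty := by
    rintro r₀ t₀ ⟨hr, ht, hrt⟩
    obtain ⟨A, B, hAB, hcA⟩ := exists_split Q (p - r₀) (by omega)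
    have hcB : Multiset.card B = q - t₀ := by
      have := congrArg Multiset.card hAB
      simp only [Multiset.card_add] at this
      omega
    exact ⟨_, A, B, hAB, hcA, hcB, rfl⟩
  have hSpbd : ∀ r₀ t₀, P r₀ t₀ → BddBelow (Sp r₀ t₀) := by
    rintro r₀ t₀ -
    refine ⟨0, ?_⟩
    rintro v ⟨A, B, -, -, -, rfl⟩
    exact cut_nonneg _ _
  have hPne : ∃ r₀ t₀, P r₀ t₀ :=
    ⟨min p c, c - min p c, ⟨by omega, by omega, by omega⟩⟩
  have hUbd : BddBelow {v | ∃ r₀ t₀, P r₀ t₀ ∧ v ∈ Sp r₀ t₀} := by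
    refine ⟨0, ?_⟩
    rintro v ⟨a, b, -, A, B, -, -, -, rfl⟩
    exact cut_nonneg _ _
  have hUne : {v | ∃ r₀ t₀, P r₀ t₀ ∧ v ∈ Sp r₀ t₀}.Nonempty := by
    obtain ⟨a, b, hab⟩ := hPne
    obtain ⟨x, hx⟩ := hSpne a b hab
    exact ⟨x, a, b, hab, hx⟩
  -- the image identity
  have himg : {v : ℝ | ∃ A₀ B₀ : Multiset ℝ,
        A₀ + B₀ = Q + Multiset.replicate c m ∧
        Multiset.card A₀ = p ∧ Multiset.card B₀ = q ∧
        v = cut (A₀ + Multiset.replicate r y) (B₀ + Multiset.replicate t y)}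
      = (fun x => C + x) '' {v | ∃ r₀ t₀, P r₀ t₀ ∧ v ∈ Sp r₀ t₀} := by
    ext v
    constructor
    · rintro ⟨A₀, B₀, hAB, hcA, hcB, rfl⟩
      obtain ⟨r₀, t₀, A₁, B₁, hrt, hA, hB, hQAB⟩ := decomp Q m c A₀ B₀ hAB
      have hA₁m : ∀ a ∈ A₁, a ≤ m := by
        intro a ha
        apply hQm
        rw [← hAB, hA]
        exact Multiset.mem_add.2 (Or.inl (Multiset.mem_add.2 (Or.inl ha)))
      have hB₁m : ∀ b ∈ B₁, b ≤ m := by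
        intro b hb
        apply hQm
        rw [← hAB, hB]
        exact Multiset.mem_add.2 (Or.inr (Multiset.mem_add.2 (Or.inl hb)))
      have h1 : Multiset.card A₁ + r₀ = p := by
        have := congrArg Multiset.card hA
        simp only [Multiset.card_add, Multiset.card_replicate] at this
        omega
      have h2 : Multiset.card B₁ + t₀ = q := by
        have := congrArg Multiset.card hB
        simp only [Multiset.card_add, Multiset.card_replicate] at this
        omega
      refine ⟨cut (A₁ + Multiset.replicate (r₀ + r) m) (B₁ + Multiset.replicate (t₀ + t) m),
        ⟨r₀, t₀, ⟨by omega, by omega, hrt⟩, A₁, B₁, hQAB, by omega, by omega, rfl⟩, ?_⟩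
      rw [hA, hB, key_cut m y hmy A₁ B₁ hA₁m hB₁m r₀ t₀ r t]
      have e1 : ((Multiset.card A₁ : ℝ) + r₀) = p := by exact_mod_cast h1
      have e2 : ((Multiset.card B₁ : ℝ) + t₀) = q := by exact_mod_cast h2
      rw [e1, e2, hCdef]
    · rintro ⟨w, ⟨r₀, t₀, ⟨hr, ht, hrt⟩, A₁, B₁, hQAB, hcA, hcB, rfl⟩, rfl⟩
      refine ⟨A₁ + Multiset.replicate r₀ m, B₁ + Multiset.replicate t₀ m, ?_, ?_, ?_, ?_⟩
      · rw [add_add_add_comm, hQAB, ← Multiset.replicate_add, hrt]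
      · simp only [Multiset.card_add, Multiset.card_replicate, hcA]; omega
      · simp only [Multiset.card_add, Multiset.card_replicate, hcB]; omega
      · have hA₁m : ∀ a ∈ A₁, a ≤ m := fun a ha =>
          hQ a (hQAB ▸ Multiset.mem_add.2 (Or.inl ha))
        have hB₁m : ∀ b ∈ B₁, b ≤ m := fun b hb =>
          hQ b (hQAB ▸ Multiset.mem_add.2 (Or.inr hb))
        rw [key_cut m y hmy A₁ B₁ hA₁m hB₁m r₀ t₀ r t]
        have e1 : ((Multiset.card A₁ : ℝ) + r₀) = p := by
          rw [hcA]
          have : (p - r₀) + r₀ = p := by omega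
          exact_mod_cast this
        have e2 : ((Multiset.card B₁ : ℝ) + t₀) = q := by
          rw [hcB]
          have : (q - t₀) + t₀ = q := by omega
          exact_mod_cast this
        rw [e1, e2, hCdef]
  -- target set rewrite
  have hTset : {v : ℝ | ∃ r₀ t₀ : ℕ, r₀ ≤ p ∧ t₀ ≤ q ∧ r₀ + t₀ = c ∧
        v = MINCUTprev (p - r₀) (q - t₀) (r₀ + r) (t₀ + t)}
      = {v | ∃ r₀ t₀, P r₀ t₀ ∧ v = sInf (Sp r₀ t₀)} := by
    ext v
    simp only [hMp, Set.mem_setOf_eq, hPdef, hSpdef]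
    constructor
    · rintro ⟨a, b, h1, h2, h3, h4⟩; exact ⟨a, b, ⟨h1, h2, h3⟩, h4⟩
    · rintro ⟨a, b, ⟨h1, h2, h3⟩, h4⟩; exact ⟨a, b, h1, h2, h3, h4⟩
  rw [hMi, himg, sInf_const_add C hUne hUbd, hTset]
  congr 1
  exact sInf_nested P Sp hSpne hSpbd hPne hUbd
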